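/- Let g, b, c > 0 with bc/g ≤ 1 (i.e. R₀ ≤ 1). Then the only solution x ∈ [0,1) of g x/(b(1-x)) = 1 - e^{-cx} is x = 0. -/
import Mathlib

/-- When R₀ ≤ 1 (i.e. bc/g ≤ 1), the only equilibrium in [0,1) is the disease-free one. -/
theorem no_endemic_equilibrium (g b c : ℝ) (hg : 0 < g) (hb : 0 < b) (hc : 0 < c)
    (hR : b * c / g ≤ 1) :
    ∀ x ∈ Set.Ico (0 : ℝ) 1,
      g * x / (b * (1 - x)) = 1 - Real.exp (-c * x) → x = 0 := by
  rintro x ⟨hx0, hx1⟩ heq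
  by_contra hne
  have hx : 0 < x := lt_of_le_of_ne hx0 (Ne.symm hne)
  have hbc : b * c ≤ g := (div_le_one hg).mp hR
  have hden : 0 < b * (1 - x) := mul_pos hb (by linarith)
  have h1 : 1 - Real.exp (-c * x) < c * x := by
    have := Real.add_one_lt_exp (x := -c * x) (by nlinarith)
    linarith
  have h2 : c * x ≤ g * x / (b * (1 - x)) := by
    rw [le_div_iff₀ hden]
    nlinarith [mul_nonneg (mul_nonneg (mul_pos hc hx).le hb.le) hx0, mul_le_mul_of_nonneg_right hbc hx0]
  linarith
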